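/- Lower bound with switch budget, general demand: fix h = b = 1 and let D_S^{(1)} denote the class of all sequences D = (D_1,…,D_T) of T independent demands whose distributions are absolutely continuous (have densities) and supported in [0,4], and whose switch number is at most S. Then for all integers S ≥ 1 and T ≥ 17S, the minimax expected dynamic regret satisfies inf_{π ∈ Π} sup_{D ∈ D_S^{(1)}} E[R^π(T, D)] ≥ (e^{−16}/4)·√(S·T). -/

import Mathlib

open MeasureTheory Finset
open scoped Classical ENNReal NNReal

noncomputable section

namespace Stmt4Aux


/-- two-bump density with weights `u` on `[0,1]` and `v` on `[3,4]`. -/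
def dens (u v : ℝ≥0) (d : ℝ) : ℝ≥0 :=
  Set.indicator (Set.Icc (0:ℝ) 1) (fun _ => u) d + Set.indicator (Set.Icc (3:ℝ) 4) (fun _ => v) d

lemma dens_meas (u v : ℝ≥0) : Measurable (dens u v) :=
  ((measurable_const.indicator measurableSet_Icc).add
    (measurable_const.indicator measurableSet_Icc))

lemma dens_meas' (u v : ℝ≥0) : Measurable (fun d => (dens u v d : ℝ≥0∞)) :=
  (dens_meas u v).coe_nnreal_ennreal

/-- the measure with that density. -/
def M (u v : ℝ≥0) : Measure ℝ := volume.withDensity (fun d => (dens u v d : ℝ≥0∞))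

lemma M_apply (u v : ℝ≥0) {s : Set ℝ} (hs : MeasurableSet s) :
    M u v s = ∫⁻ d in s, (dens u v d : ℝ≥0∞) := by
  rw [M, withDensity_apply _ hs]

lemma lint_dens (u v : ℝ≥0) {s : Set ℝ} (hs : MeasurableSet s) :
    ∫⁻ d in s, (dens u v d : ℝ≥0∞)
      = (u : ℝ≥0∞) * volume (s ∩ Set.Icc (0:ℝ) 1) + (v : ℝ≥0∞) * volume (s ∩ Set.Icc (3:ℝ) 4) := by
  have h : ∀ d, (dens u v d : ℝ≥0∞)
      = Set.indicator (Set.Icc (0:ℝ) 1) (fun _ => (u:ℝ≥0∞)) d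
        + Set.indicator (Set.Icc (3:ℝ) 4) (fun _ => (v:ℝ≥0∞)) d := by
    intro d
    unfold dens
    push_cast
    congr 1 <;> · simp [Set.indicator]; split <;> simp
  simp_rw [h]
  rw [lintegral_add_left (measurable_const.indicator measurableSet_Icc)]
  rw [lintegral_indicator_const measurableSet_Icc, lintegral_indicator_const measurableSet_Icc,
    Measure.restrict_apply measurableSet_Icc, Measure.restrict_apply measurableSet_Icc,
    Set.inter_comm (Set.Icc (0:ℝ) 1), Set.inter_comm (Set.Icc (3:ℝ) 4)]

lemma M_univ (u v : ℝ≥0) : M u v Set.univ = (u : ℝ≥0∞) + v := by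
  rw [M_apply _ _ MeasurableSet.univ, lint_dens _ _ MeasurableSet.univ]
  simp [Real.volume_Icc]
  norm_num

lemma M_compl (u v : ℝ≥0) : M u v (Set.Icc (0:ℝ) 4)ᶜ = 0 := by
  rw [M_apply _ _ measurableSet_Icc.compl, lint_dens _ _ measurableSet_Icc.compl]
  have h1 : (Set.Icc (0:ℝ) 4)ᶜ ∩ Set.Icc (0:ℝ) 1 = ∅ := by
    ext x; simp only [Set.mem_inter_iff, Set.mem_compl_iff, Set.mem_Icc, Set.mem_empty_iff_false]
    constructor
    · rintro ⟨h, h0, h1⟩; exact h ⟨h0, by linarith⟩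
    · exact False.elim
  have h2 : (Set.Icc (0:ℝ) 4)ᶜ ∩ Set.Icc (3:ℝ) 4 = ∅ := by
    ext x; simp only [Set.mem_inter_iff, Set.mem_compl_iff, Set.mem_Icc, Set.mem_empty_iff_false]
    constructor
    · rintro ⟨h, h0, h1⟩; exact h ⟨by linarith, h1⟩
    · exact False.elim
  simp [h1, h2]

instance M_fin (u v : ℝ≥0) : IsFiniteMeasure (M u v) := by
  constructor
  rw [M_univ]
  exact ENNReal.add_lt_top.2 ⟨ENNReal.coe_lt_top, ENNReal.coe_lt_top⟩

lemma M_prob (u v : ℝ≥0) (h : (u:ℝ≥0∞) + v = 1) : IsProbabilityMeasure (M u v) := by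
  constructor; rw [M_univ, h]

lemma M_ac (u v : ℝ≥0) : M u v ≪ volume := withDensity_absolutelyContinuous _ _

lemma M_Icc (u v : ℝ≥0) (h : (u:ℝ≥0∞) + v = 1) : M u v (Set.Icc (0:ℝ) 4) = 1 := by
  haveI := M_prob u v h
  have := prob_compl_eq_zero_iff (μ := M u v) (s := Set.Icc (0:ℝ) 4) measurableSet_Icc
  rw [← this.1 (M_compl u v)]

/-- integral of a continuous function against `M u v`. -/
lemma M_integral (u v : ℝ≥0) (h : ℝ → ℝ) (hc : Continuous h) :
    ∫ d, h d ∂(M u v)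
      = (u : ℝ) * (∫ d in (0:ℝ)..1, h d) + (v : ℝ) * ∫ d in (3:ℝ)..4, h d := by
  rw [M, integral_withDensity_eq_integral_smul (dens_meas u v)]
  have key : ∀ d, dens u v d • h d
      = Set.indicator (Set.Icc (0:ℝ) 1) (fun d => (u:ℝ) * h d) d
        + Set.indicator (Set.Icc (3:ℝ) 4) (fun d => (v:ℝ) * h d) d := by
    intro d
    unfold dens
    rcases le_or_gt d 1 with hd | hd
    · have : d ∉ Set.Icc (3:ℝ) 4 := by simp [Set.mem_Icc]; intro h3; linarith
      by_cases hd0 : d ∈ Set.Icc (0:ℝ) 1 <;>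
        simp [Set.indicator_of_notMem this, hd0, NNReal.smul_def]
    · have : d ∉ Set.Icc (0:ℝ) 1 := by simp [Set.mem_Icc]; intro h3; linarith
      by_cases hd0 : d ∈ Set.Icc (3:ℝ) 4 <;>
        simp [Set.indicator_of_notMem this, hd0, NNReal.smul_def]
  simp_rw [key]
  have int1 : Integrable (Set.indicator (Set.Icc (0:ℝ) 1) (fun d => (u:ℝ) * h d)) volume :=
    ((continuous_const.mul hc).integrableOn_Icc).integrable_indicator measurableSet_Icc
  have int2 : Integrable (Set.indicator (Set.Icc (3:ℝ) 4) (fun d => (v:ℝ) * h d)) volume :=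
    ((continuous_const.mul hc).integrableOn_Icc).integrable_indicator measurableSet_Icc
  rw [integral_add int1 int2, integral_indicator measurableSet_Icc,
    integral_indicator measurableSet_Icc,
    integral_Icc_eq_integral_Ioc, integral_Icc_eq_integral_Ioc,
    ← intervalIntegral.integral_of_le (by norm_num : (0:ℝ) ≤ 1),
    ← intervalIntegral.integral_of_le (by norm_num : (3:ℝ) ≤ 4),
    intervalIntegral.integral_const_mul, intervalIntegral.integral_const_mul]


/-! ### interval integrals of `|x - d|` -/

def A (x : ℝ) : ℝ := ∫ d in (0:ℝ)..1, |x - d|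
def B (x : ℝ) : ℝ := ∫ d in (3:ℝ)..4, |x - d|
lemma A_def (x : ℝ) : A x = ∫ d in (0:ℝ)..1, |x - d| := rfl
lemma B_def (x : ℝ) : B x = ∫ d in (3:ℝ)..4, |x - d| := rfl

lemma cont_abs (x : ℝ) : Continuous (fun d : ℝ => |x - d|) :=
  (continuous_const.sub continuous_id).abs

lemma intinteg (x a b : ℝ) : IntervalIntegrable (fun d => |x - d|) volume a b :=
  (cont_abs x).intervalIntegrable a b

lemma A_nonneg (x : ℝ) : 0 ≤ A x :=
  intervalIntegral.integral_nonneg (by norm_num) (fun u _ => abs_nonneg _)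

lemma B_nonneg (x : ℝ) : 0 ≤ B x :=
  intervalIntegral.integral_nonneg (by norm_num) (fun u _ => abs_nonneg _)

lemma lin_int (x a b : ℝ) : ∫ d in a..b, (x - d) = (b - a) * x - (b^2 - a^2)/2 := by
  rw [intervalIntegral.integral_sub (intervalIntegrable_const) intervalIntegral.intervalIntegrable_id,
    intervalIntegral.integral_const, integral_id, smul_eq_mul]

lemma A_eq (x : ℝ) (hx : 1 ≤ x) : A x = x - 1/2 := by
  rw [A]
  have : ∀ d ∈ Set.uIcc (0:ℝ) 1, |x - d| = x - d := by
    intro d hd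
    rw [Set.uIcc_of_le (by norm_num : (0:ℝ) ≤ 1)] at hd
    exact abs_of_nonneg (by cases hd; linarith)
  rw [intervalIntegral.integral_congr this, lin_int]
  norm_num

lemma B_eq (x : ℝ) (hx : x ≤ 3) : B x = 7/2 - x := by
  rw [B]
  have : ∀ d ∈ Set.uIcc (3:ℝ) 4, |x - d| = d - x := by
    intro d hd
    rw [Set.uIcc_of_le (by norm_num : (3:ℝ) ≤ 4)] at hd
    rw [abs_sub_comm]
    exact abs_of_nonneg (by cases hd; linarith)
  rw [intervalIntegral.integral_congr this]
  have : ∀ d ∈ Set.uIcc (3:ℝ) 4, d - x = -(x - d) := by intro d _; ring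
  rw [intervalIntegral.integral_congr this, intervalIntegral.integral_neg, lin_int]
  ring

lemma A_ge (x : ℝ) : |x - 1/2| ≤ A x := by
  have h := intervalIntegral.abs_integral_le_integral_abs (μ := volume) (f := fun d => x - d)
    (a := 0) (b := 1) (by norm_num)
  rw [lin_int] at h
  have h2 : ((1:ℝ) - 0) * x - ((1:ℝ)^2 - 0^2)/2 = x - 1/2 := by ring
  rw [h2] at h
  rw [A_def]; exact h

lemma B_ge (x : ℝ) : |x - 7/2| ≤ B x := by
  have h := intervalIntegral.abs_integral_le_integral_abs (μ := volume) (f := fun d => x - d)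
    (a := 3) (b := 4) (by norm_num)
  rw [lin_int] at h
  have h2 : ((4:ℝ) - 3) * x - ((4:ℝ)^2 - 3^2)/2 = x - 7/2 := by ring
  rw [h2] at h
  rw [B_def]; exact h

/-! ### the two demand distributions -/

variable (δ : ℝ)

def wp : ℝ≥0 := Real.toNNReal ((1+δ)/2)
def wm : ℝ≥0 := Real.toNNReal ((1-δ)/2)

def ν (b : Bool) : Measure ℝ := if b then M (wp δ) (wm δ) else M (wm δ) (wp δ)

lemma wp_coe (h0 : 0 ≤ δ) : ((wp δ : ℝ≥0) : ℝ) = (1+δ)/2 :=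
  Real.coe_toNNReal _ (by linarith)
lemma wm_coe (h1 : δ ≤ 1) : ((wm δ : ℝ≥0) : ℝ) = (1-δ)/2 :=
  Real.coe_toNNReal _ (by linarith)

lemma wpm_sum (h0 : 0 ≤ δ) (h1 : δ ≤ 1) : ((wp δ : ℝ≥0∞)) + (wm δ) = 1 := by
  rw [← ENNReal.coe_add, ← ENNReal.coe_one]
  congr 1
  have : ((wp δ + wm δ : ℝ≥0) : ℝ) = ((1:ℝ≥0) : ℝ) := by
    push_cast
    rw [wp_coe δ h0, wm_coe δ h1]; ring
  exact_mod_cast this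

lemma ν_prob (b : Bool) (h0 : 0 ≤ δ) (h1 : δ ≤ 1) : IsProbabilityMeasure (ν δ b) := by
  cases b <;> simp only [ν, if_true, if_false, Bool.false_eq_true] <;> apply M_prob
  · rw [add_comm]; exact wpm_sum δ h0 h1
  · exact wpm_sum δ h0 h1

/-- the expected cost function -/
def f (b : Bool) (x : ℝ) : ℝ := ∫ d, |x - d| ∂(ν δ b)

lemma f_eq_true (x : ℝ) : f δ true x = (wp δ : ℝ) * A x + (wm δ : ℝ) * B x := by
  rw [f, ν, if_pos rfl, M_integral _ _ _ (cont_abs x)]; rfl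

lemma f_eq_false (x : ℝ) : f δ false x = (wm δ : ℝ) * A x + (wp δ : ℝ) * B x := by
  rw [f, ν]
  simp only [Bool.false_eq_true, if_false]
  rw [M_integral _ _ _ (cont_abs x)]; rfl

lemma f_nonneg (b : Bool) (x : ℝ) : 0 ≤ f δ b x :=
  integral_nonneg (fun d => abs_nonneg _)

/-- value at the good point -/
lemma f_true_one (h0 : 0 ≤ δ) (h1 : δ ≤ 1) : f δ true 1 = 3/2 - δ := by
  rw [f_eq_true, A_eq 1 le_rfl, B_eq 1 (by norm_num), wp_coe δ h0, wm_coe δ h1]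
  ring

lemma f_false_three (h0 : 0 ≤ δ) (h1 : δ ≤ 1) : f δ false 3 = 3/2 - δ := by
  rw [f_eq_false, A_eq 3 (by norm_num), B_eq 3 le_rfl, wp_coe δ h0, wm_coe δ h1]
  ring

/-- lower bounds on the bad half -/
lemma f_true_ge (h0 : 0 ≤ δ) (h1 : δ ≤ 1) (x : ℝ) (hx : 2 ≤ x) : 3/2 ≤ f δ true x := by
  rw [f_eq_true, A_eq x (by linarith), wp_coe δ h0, wm_coe δ h1]
  have hB := B_ge x
  have hB0 := B_nonneg x
  rcases le_or_gt x (7/2) with h | h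
  · have : 7/2 - x ≤ B x := le_trans (by rw [abs_sub_comm]; exact le_abs_self _) hB
    nlinarith
  · nlinarith

lemma f_false_ge (h0 : 0 ≤ δ) (h1 : δ ≤ 1) (x : ℝ) (hx : x ≤ 2) : 3/2 ≤ f δ false x := by
  rw [f_eq_false, B_eq x (by linarith), wp_coe δ h0, wm_coe δ h1]
  have hA := A_ge x
  have hA0 := A_nonneg x
  rcases le_or_gt (1/2) x with h | h
  · have : x - 1/2 ≤ A x := le_trans (le_abs_self _) hA
    nlinarith
  · nlinarith

/-- the infimum of the cost over `[0,4]` -/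
def If (b : Bool) : ℝ := sInf ((fun x => f δ b x) '' Set.Icc (0:ℝ) 4)

lemma If_bddBelow (b : Bool) : BddBelow ((fun x => f δ b x) '' Set.Icc (0:ℝ) 4) := by
  refine ⟨0, ?_⟩
  rintro y ⟨x, _, rfl⟩
  exact f_nonneg δ b x

lemma If_nonneg (b : Bool) : 0 ≤ If δ b := by
  refine le_csInf ⟨f δ b 0, ⟨0, Set.mem_Icc.mpr ⟨le_rfl, by norm_num⟩, rfl⟩⟩ ?_
  rintro y ⟨x, _, rfl⟩
  exact f_nonneg δ b x

lemma If_le (b : Bool) (h0 : 0 ≤ δ) (h1 : δ ≤ 1) : If δ b ≤ 3/2 - δ := by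
  cases b
  · refine le_trans (csInf_le (If_bddBelow δ false)
      ⟨3, Set.mem_Icc.mpr ⟨by norm_num, by norm_num⟩, rfl⟩) ?_
    show f δ false 3 ≤ _
    rw [f_false_three δ h0 h1]
  · refine le_trans (csInf_le (If_bddBelow δ true)
      ⟨1, Set.mem_Icc.mpr ⟨by norm_num, by norm_num⟩, rfl⟩) ?_
    show f δ true 1 ≤ _
    rw [f_true_one δ h0 h1]

lemma If_le_f (b : Bool) (x : ℝ) (hx : x ∈ Set.Icc (0:ℝ) 4) : If δ b ≤ f δ b x :=
  csInf_le (If_bddBelow δ b) ⟨x, hx, rfl⟩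

/-- regret lower bounds -/
lemma g_true (h0 : 0 ≤ δ) (h1 : δ ≤ 1) (x : ℝ) (hx : 2 ≤ x) : δ ≤ f δ true x - If δ true := by
  have := f_true_ge δ h0 h1 x hx
  have := If_le δ true h0 h1
  linarith

lemma g_false (h0 : 0 ≤ δ) (h1 : δ ≤ 1) (x : ℝ) (hx : x ≤ 2) : δ ≤ f δ false x - If δ false := by
  have := f_false_ge δ h0 h1 x hx
  have := If_le δ false h0 h1
  linarith

/-- the cost is bounded by 4 on [0,4] -/
lemma f_le (b : Bool) (h0 : 0 ≤ δ) (h1 : δ ≤ 1) (x : ℝ) (hx : x ∈ Set.Icc (0:ℝ) 4) :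
    f δ b x ≤ 4 := by
  haveI := ν_prob δ b h0 h1
  have hae : ∀ᵐ d ∂(ν δ b), ‖|x - d|‖ ≤ 4 := by
    have hcompl : (ν δ b) (Set.Icc (0:ℝ) 4)ᶜ = 0 := by
      cases b <;> simp only [ν, if_true, if_false, Bool.false_eq_true] <;> exact M_compl _ _
    filter_upwards [measure_eq_zero_iff_ae_notMem.mp hcompl] with d hd
    rw [Set.notMem_compl_iff, Set.mem_Icc] at hd
    rw [Real.norm_eq_abs, abs_abs]
    rw [Set.mem_Icc] at hx
    rw [abs_le]; constructor <;> [linarith [hd.2]; linarith [hd.1]]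
  have := norm_integral_le_of_norm_le_const (C := 4) hae
  rw [probReal_univ] at this
  simp only [ENNReal.toReal_one, mul_one] at this
  calc f δ b x ≤ |f δ b x| := le_abs_self _
  _ = ‖∫ d, |x - d| ∂(ν δ b)‖ := rfl
  _ ≤ 4 := this

/-- Lipschitz/measurability -/
lemma integrable_abs (b : Bool) (h0 : 0 ≤ δ) (h1 : δ ≤ 1) (x : ℝ) :
    Integrable (fun d => |x - d|) (ν δ b) := by
  haveI := ν_prob δ b h0 h1
  have hcompl : (ν δ b) (Set.Icc (0:ℝ) 4)ᶜ = 0 := by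
    cases b <;> simp only [ν, if_true, if_false, Bool.false_eq_true] <;> exact M_compl _ _
  refine Integrable.mono' (integrable_const (|x| + 4)) (cont_abs x).aestronglyMeasurable ?_
  filter_upwards [measure_eq_zero_iff_ae_notMem.mp hcompl] with d hd
  rw [Set.notMem_compl_iff, Set.mem_Icc] at hd
  rw [Real.norm_eq_abs, abs_abs]
  rw [abs_sub_comm]
  calc |d - x| ≤ |d| + |x| := abs_sub _ _
  _ ≤ 4 + |x| := by
      have : |d| ≤ 4 := abs_le.2 ⟨by linarith [hd.1], hd.2⟩
      linarith
  _ = |x| + 4 := by ring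

lemma f_lipschitz (b : Bool) (h0 : 0 ≤ δ) (h1 : δ ≤ 1) : LipschitzWith 1 (f δ b) := by
  haveI := ν_prob δ b h0 h1
  apply LipschitzWith.of_dist_le_mul
  intro x y
  rw [Real.dist_eq, Real.dist_eq, NNReal.coe_one, one_mul, f, f,
    ← integral_sub (integrable_abs δ b h0 h1 x) (integrable_abs δ b h0 h1 y)]
  have hae : ∀ᵐ d ∂(ν δ b), ‖|x - d| - |y - d|‖ ≤ |x - y| := by
    filter_upwards with d
    rw [Real.norm_eq_abs]
    have := abs_abs_sub_abs_le_abs_sub (x - d) (y - d)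
    simpa using this
  have hb := norm_integral_le_of_norm_le_const (C := |x - y|) hae
  simp only [probReal_univ, ENNReal.toReal_one, mul_one, Real.norm_eq_abs] at hb
  exact hb

lemma f_measurable (b : Bool) (h0 : 0 ≤ δ) (h1 : δ ≤ 1) : Measurable (f δ b) :=
  (f_lipschitz δ b h0 h1).continuous.measurable



lemma lintegral_pi_prod : ∀ {m : ℕ} (μ : Fin m → Measure ℝ), (∀ i, SigmaFinite (μ i)) →
    ∀ (f : Fin m → ℝ → ℝ≥0∞), (∀ i, Measurable (f i)) →
    ∫⁻ ω, ∏ i, f i (ω i) ∂(Measure.pi μ) = ∏ i, ∫⁻ x, f i x ∂(μ i) := by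
  intro m
  induction m with
  | zero =>
    intro μ _ f _
    simp [lintegral_const, Measure.pi_univ]
  | succ m ih =>
    intro μ hσ f hf
    haveI := hσ
    have hmp := measurePreserving_piFinSuccAbove μ 0
    have hmeas : Measurable (fun p : ℝ × (Fin m → ℝ) => f 0 p.1 * ∏ j, f (Fin.succ j) (p.2 j)) := by
      apply Measurable.mul
      · exact (hf 0).comp measurable_fst
      · exact Finset.measurable_prod _
          (fun j _ => (hf _).comp ((measurable_pi_apply j).comp measurable_snd))
    have key : ∀ ω : Fin (m+1) → ℝ, ∏ i, f i (ω i)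
        = (fun p : ℝ × (Fin m → ℝ) => f 0 p.1 * ∏ j, f (Fin.succ j) (p.2 j))
            ((MeasurableEquiv.piFinSuccAbove (fun _ => ℝ) 0) ω) := by
      intro ω
      rw [Fin.prod_univ_succ]
      simp [MeasurableEquiv.piFinSuccAbove, Fin.insertNthEquiv, Fin.tail]
    calc ∫⁻ ω, ∏ i, f i (ω i) ∂(Measure.pi μ)
        = ∫⁻ p, f 0 p.1 * ∏ j, f (Fin.succ j) (p.2 j)
            ∂((μ 0).prod (Measure.pi fun j => μ ((0:Fin (m+1)).succAbove j))) := by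
          rw [← hmp.lintegral_comp hmeas]
          exact lintegral_congr key
      _ = (∫⁻ x, f 0 x ∂(μ 0)) * ∫⁻ y, ∏ j, f (Fin.succ j) (y j)
            ∂(Measure.pi fun j => μ (Fin.succ j)) := by
          rw [Fin.succAbove_zero]
          exact lintegral_prod_mul (hf 0).aemeasurable
            (Finset.measurable_prod _
              (fun j _ => (hf _).comp (measurable_pi_apply j))).aemeasurable
      _ = ∏ i, ∫⁻ x, f i x ∂(μ i) := by
          rw [ih _ (fun j => inferInstance) _ (fun j => hf _), Fin.prod_univ_succ]

lemma pi_withDensity {m : ℕ} (f : Fin m → ℝ → ℝ≥0∞) (hf : ∀ i, Measurable (f i))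
    (hσ : ∀ i, SigmaFinite ((volume : Measure ℝ).withDensity (f i))) :
    Measure.pi (fun i => (volume : Measure ℝ).withDensity (f i))
      = (Measure.pi fun _ : Fin m => (volume : Measure ℝ)).withDensity
          (fun ω => ∏ i, f i (ω i)) := by
  haveI := hσ
  refine Measure.pi_eq fun s hs => ?_
  rw [withDensity_apply _ (MeasurableSet.univ_pi hs)]
  have key : ∀ ω : Fin m → ℝ, (Set.pi Set.univ s).indicator (fun ω => ∏ i, f i (ω i)) ω
      = ∏ i, (s i).indicator (f i) (ω i) := by
    intro ω
    by_cases h : ω ∈ Set.pi Set.univ s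
    · rw [Set.indicator_of_mem h]
      refine Finset.prod_congr rfl fun i _ => ?_
      rw [Set.indicator_of_mem (h i (Set.mem_univ i))]
    · rw [Set.indicator_of_notMem h]
      rw [Set.mem_univ_pi] at h
      push_neg at h
      obtain ⟨i, hi⟩ := h
      exact (Finset.prod_eq_zero (Finset.mem_univ i)
        (by rw [Set.indicator_of_notMem hi])).symm
  rw [← lintegral_indicator (MeasurableSet.univ_pi hs)]
  rw [lintegral_congr key]
  rw [lintegral_pi_prod _ (fun _ => inferInstance) _
    (fun i => (hf i).indicator (hs i))]
  refine Finset.prod_congr rfl fun i _ => ?_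
  rw [lintegral_indicator (hs i), withDensity_apply _ (hs i)]

lemma ennreal_le_rpow_half {a b : ℝ≥0∞} (h : a * a ≤ b) : a ≤ b ^ (1/2 : ℝ) := by
  have h2 : a ^ (2:ℝ) ≤ b := by
    rw [show (2:ℝ) = ((2:ℕ):ℝ) by norm_num, ENNReal.rpow_natCast, sq]
    exact h
  have h3 := ENNReal.rpow_le_rpow h2 (by norm_num : (0:ℝ) ≤ 1/2)
  rwa [← ENNReal.rpow_mul, show (2:ℝ) * (1/2) = 1 by norm_num, ENNReal.rpow_one] at h3

/-- Cauchy–Schwarz / Hellinger bound for product measures given by densities. -/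
lemma hellinger_bound {m : ℕ} (p p' r : Fin m → ℝ → ℝ≥0∞)
    (hp : ∀ i, Measurable (p i)) (hp' : ∀ i, Measurable (p' i)) (hr : ∀ i, Measurable (r i))
    (hσp : ∀ i, SigmaFinite ((volume : Measure ℝ).withDensity (p i)))
    (hσp' : ∀ i, SigmaFinite ((volume : Measure ℝ).withDensity (p' i)))
    (hσr : ∀ i, SigmaFinite ((volume : Measure ℝ).withDensity (r i)))
    (hdom : ∀ i d, r i d * r i d ≤ p i d * p' i d)
    {A : Set (Fin m → ℝ)} (hA : MeasurableSet A) :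
    Measure.pi (fun i => (volume : Measure ℝ).withDensity (r i)) A
      ≤ (Measure.pi (fun i => (volume : Measure ℝ).withDensity (p i)) A) ^ (1/2:ℝ)
        * (Measure.pi (fun i => (volume : Measure ℝ).withDensity (p' i)) A) ^ (1/2:ℝ) := by
  rw [pi_withDensity p hp hσp, pi_withDensity p' hp' hσp', pi_withDensity r hr hσr]
  rw [withDensity_apply _ hA, withDensity_apply _ hA, withDensity_apply _ hA]
  set Λ := (Measure.pi fun _ : Fin m => (volume : Measure ℝ)).restrict A
  have hPmeas : Measurable (fun ω : Fin m → ℝ => ∏ i, p i (ω i)) :=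
    Finset.measurable_prod _ (fun i _ => (hp i).comp (measurable_pi_apply i))
  have hP'meas : Measurable (fun ω : Fin m → ℝ => ∏ i, p' i (ω i)) :=
    Finset.measurable_prod _ (fun i _ => (hp' i).comp (measurable_pi_apply i))
  have step1 : ∀ ω : Fin m → ℝ, ∏ i, r i (ω i)
      ≤ ((fun ω => ∏ i, p i (ω i)) ω) ^ (1/2:ℝ) * ((fun ω => ∏ i, p' i (ω i)) ω) ^ (1/2:ℝ) := by
    intro ω
    calc ∏ i, r i (ω i) ≤ ∏ i, (p i (ω i) * p' i (ω i)) ^ (1/2:ℝ) :=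
          Finset.prod_le_prod' fun i _ => ennreal_le_rpow_half (hdom i (ω i))
    _ = (∏ i, p i (ω i) * p' i (ω i)) ^ (1/2:ℝ) :=
          ENNReal.prod_rpow_of_nonneg (by norm_num : (0:ℝ) ≤ 1/2)
    _ = _ := by
          rw [Finset.prod_mul_distrib, ENNReal.mul_rpow_of_nonneg _ _ (by norm_num)]
  calc ∫⁻ ω in A, ∏ i, r i (ω i) ∂(Measure.pi fun _ : Fin m => (volume : Measure ℝ))
      ≤ ∫⁻ ω, ((fun ω : Fin m → ℝ => ∏ i, p i (ω i)) ω) ^ (1/2:ℝ)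
          * ((fun ω : Fin m → ℝ => ∏ i, p' i (ω i)) ω) ^ (1/2:ℝ) ∂Λ :=
        lintegral_mono step1
    _ ≤ (∫⁻ ω, ((fun ω : Fin m → ℝ => ∏ i, p i (ω i)) ω ^ (1/2:ℝ)) ^ (2:ℝ) ∂Λ) ^ (1/(2:ℝ))
        * (∫⁻ ω, ((fun ω : Fin m → ℝ => ∏ i, p' i (ω i)) ω ^ (1/2:ℝ)) ^ (2:ℝ) ∂Λ) ^ (1/(2:ℝ)) := by
        exact ENNReal.lintegral_mul_le_Lp_mul_Lq Λ Real.HolderConjugate.two_two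
          ((hPmeas.pow_const _).aemeasurable) ((hP'meas.pow_const _).aemeasurable)
    _ = (∫⁻ ω in A, ∏ i, p i (ω i) ∂(Measure.pi fun _ : Fin m => (volume : Measure ℝ))) ^ (1/2:ℝ)
        * (∫⁻ ω in A, ∏ i, p' i (ω i) ∂(Measure.pi fun _ : Fin m => (volume : Measure ℝ))) ^ (1/2:ℝ) := by
        congr 1 <;>
        · congr 1
          refine lintegral_congr fun ω => ?_
          rw [← ENNReal.rpow_mul]
          norm_num



def blk (S n k : ℕ) : ℕ := min ((k-1)/n) (S-1)

lemma blk_lt {S : ℕ} (hS : 0 < S) (n k : ℕ) : blk S n k < S :=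
  lt_of_le_of_lt (min_le_right _ _) (by omega)

lemma blk_mono (S n : ℕ) : Monotone (blk S n) := by
  intro a b hab
  exact min_le_min (Nat.div_le_div_right (by omega)) le_rfl

/-- number of switch points of any function of the block index -/
lemma card_blkjump (S n T : ℕ) (hS : 0 < S) :
    ((Finset.Icc 2 T).filter (fun t => blk S n t ≠ blk S n (t-1))).card ≤ S := by
  apply le_trans (Finset.card_le_card_of_injOn (fun t => blk S n t)
    (fun t _ => Finset.mem_range.mpr (blk_lt hS n t)) ?_) (by simp)
  intro a ha b hb hab
  simp only [Finset.mem_coe, Finset.mem_filter, Finset.mem_Icc] at ha hb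
  by_contra hne
  have hab' : blk S n a = blk S n b := hab
  rcases Nat.lt_or_ge a b with h | h
  · have h1 : blk S n a ≤ blk S n (b-1) := blk_mono S n (by omega)
    have h2 : blk S n (b-1) ≤ blk S n b := blk_mono S n (by omega)
    have := hb.2
    omega
  · have hba : b < a := by omega
    have h1 : blk S n b ≤ blk S n (a-1) := blk_mono S n (by omega)
    have h2 : blk S n (a-1) ≤ blk S n a := blk_mono S n (by omega)
    have := ha.2
    omega

/-- block-size bound -/
lemma card_blk_le (S n T : ℕ) (hn : 0 < n) (hT : T ≤ S * n) (j : ℕ) :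
    (Finset.univ.filter (fun i : Fin T => blk S n ((i:ℕ)+1) = j)).card ≤ n := by
  have : (Finset.univ.filter (fun i : Fin T => blk S n ((i:ℕ)+1) = j)).card
      ≤ (Finset.Ico (j*n) (j*n+n)).card := by
    refine Finset.card_le_card_of_injOn (fun i => (i : ℕ)) ?_
      (fun a _ b _ hab => Fin.val_injective hab)
    · intro i hi
      simp only [Finset.mem_coe, Finset.mem_filter, Finset.mem_univ, true_and] at hi
      have hi' : blk S n ((i:ℕ)+1) = j := hi
      rw [blk] at hi'
      simp only [Nat.add_sub_cancel] at hi'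
      have hj1 : j ≤ (i:ℕ)/n := by omega
      have h1 : j*n ≤ (i:ℕ) := by
        calc j*n ≤ ((i:ℕ)/n)*n := Nat.mul_le_mul_right n hj1
        _ ≤ (i:ℕ) := Nat.div_mul_le_self _ _
      have h2 : (i:ℕ) < j*n + n := by
        rcases Nat.lt_or_ge ((i:ℕ)/n) S with hc | hc
        · -- then min = i/n possibly; two cases
          rcases Nat.lt_or_ge ((i:ℕ)/n) (S-1) with hc2 | hc2
          · have : (i:ℕ)/n = j := by omega
            have hmod := Nat.div_add_mod (i:ℕ) n
            have := Nat.mod_lt (i:ℕ) hn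
            nlinarith [this, hmod]
          · have hj : j = S - 1 := by omega
            subst hj
            have hiT : (i:ℕ) < T := i.2
            have hge : S - 1 ≤ (i:ℕ)/n := by omega
            have : (S-1)*n ≤ (i:ℕ) := by
              calc (S-1)*n ≤ ((i:ℕ)/n)*n := Nat.mul_le_mul_right n hge
              _ ≤ (i:ℕ) := Nat.div_mul_le_self _ _
            have hSn : S * n = (S-1)*n + n := by
              have hS : 0 < S := by
                by_contra h
                simp only [Nat.not_lt, Nat.le_zero] at h
                subst h
                simp at hiT
                omega
              cases S with
              | zero => omega
              | succ s => simp [Nat.succ_sub_one, Nat.succ_mul]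
            omega
        · have hj : j = S - 1 := by omega
          subst hj
          have hiT : (i:ℕ) < T := i.2
          have hge : S - 1 ≤ (i:ℕ)/n := by omega
          have : (S-1)*n ≤ (i:ℕ) := by
            calc (S-1)*n ≤ ((i:ℕ)/n)*n := Nat.mul_le_mul_right n hge
            _ ≤ (i:ℕ) := Nat.div_mul_le_self _ _
          have hSn : S * n = (S-1)*n + n := by
            have hS : 0 < S := by
              rcases Nat.eq_zero_or_pos S with h | h
              · subst h; simp at hc; omega
              · exact h
            cases S with
            | zero => omega
            | succ s => simp [Nat.succ_sub_one, Nat.succ_mul]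
          omega
      exact Finset.mem_Ico.mpr ⟨h1, h2⟩
  simpa using this


/-! ### densities as ℝ≥0∞-valued functions, Hellinger domination -/

def qden (δ : ℝ) (b : Bool) : ℝ → ℝ≥0∞ :=
  fun d => ((dens (if b then wp δ else wm δ) (if b then wm δ else wp δ) d : ℝ≥0) : ℝ≥0∞)

lemma qden_meas (δ : ℝ) (b : Bool) : Measurable (qden δ b) := dens_meas' _ _

lemma ν_eq (δ : ℝ) (b : Bool) : ν δ b = (volume : Measure ℝ).withDensity (qden δ b) := by
  cases b <;> rfl

def cg (δ : ℝ) : ℝ≥0 := Real.toNNReal (Real.sqrt ((1-δ)*(1+δ)) / 2)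

def qg (δ : ℝ) : ℝ → ℝ≥0∞ := fun d => ((dens (cg δ) (cg δ) d : ℝ≥0) : ℝ≥0∞)

lemma qg_meas (δ : ℝ) : Measurable (qg δ) := dens_meas' _ _

lemma νg_eq (δ : ℝ) : M (cg δ) (cg δ) = (volume : Measure ℝ).withDensity (qg δ) := rfl

lemma cg_sq (δ : ℝ) (h0 : 0 ≤ δ) (h1 : δ ≤ 1) : cg δ * cg δ = wp δ * wm δ := by
  have hx : (0:ℝ) ≤ (1-δ)*(1+δ) := by nlinarith
  have h2 : (0:ℝ) ≤ Real.sqrt ((1-δ)*(1+δ)) / 2 := by positivity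
  rw [cg, wp, wm]
  rw [← Real.toNNReal_mul h2, ← Real.toNNReal_mul (by linarith : (0:ℝ) ≤ (1+δ)/2)]
  congr 1
  rw [div_mul_div_comm, Real.mul_self_sqrt hx]
  ring

lemma qg_dom (δ : ℝ) (h0 : 0 ≤ δ) (h1 : δ ≤ 1) (d : ℝ) :
    qg δ d * qg δ d ≤ qden δ true d * qden δ false d := by
  rw [qg, qden, qden]
  simp only [if_true, Bool.false_eq_true, if_false]
  rw [← ENNReal.coe_mul, ← ENNReal.coe_mul, ENNReal.coe_le_coe]
  by_cases hd1 : d ∈ Set.Icc (0:ℝ) 1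
  · have hd2 : d ∉ Set.Icc (3:ℝ) 4 := by
      rw [Set.mem_Icc] at hd1 ⊢; push_neg; intro h; linarith [hd1.2]
    simp only [dens, Set.indicator_of_mem hd1, Set.indicator_of_notMem hd2, add_zero]
    exact le_of_eq (cg_sq δ h0 h1)
  · by_cases hd2 : d ∈ Set.Icc (3:ℝ) 4
    · simp only [dens, Set.indicator_of_mem hd2, Set.indicator_of_notMem hd1, zero_add]
      rw [cg_sq δ h0 h1, mul_comm (wm δ) (wp δ)]
    · simp [dens, Set.indicator_of_notMem hd1, Set.indicator_of_notMem hd2]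

lemma cg_le (δ : ℝ) (h0 : 0 ≤ δ) (h1 : δ ≤ 1) :
    ((cg δ : ℝ≥0∞)) + (cg δ) ≤ 1 := by
  have hx : (0:ℝ) ≤ (1-δ)*(1+δ) := by nlinarith
  have h2 : Real.sqrt ((1-δ)*(1+δ)) ≤ 1 := Real.sqrt_le_one.mpr (by nlinarith)
  rw [← ENNReal.coe_add, ← ENNReal.coe_one, ENNReal.coe_le_coe, ← Real.toNNReal_one, cg,
    ← Real.toNNReal_add (by positivity) (by positivity)]
  exact Real.toNNReal_le_toNNReal (by linarith)

lemma cg_toReal (δ : ℝ) :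
    (((cg δ : ℝ≥0∞)) + (cg δ)).toReal = Real.sqrt ((1-δ)*(1+δ)) := by
  rw [← ENNReal.coe_add, ENNReal.coe_toReal, NNReal.coe_add, cg,
    Real.coe_toNNReal _ (by positivity)]
  ring

/-! ### signs, product measures, pair bound -/

instance ν_fin (δ : ℝ) (b : Bool) : IsFiniteMeasure (ν δ b) := by
  unfold ν; split <;> infer_instance

lemma ν_ac (δ : ℝ) (b : Bool) : ν δ b ≪ volume := by
  rw [ν_eq]; exact withDensity_absolutelyContinuous _ _

lemma ν_Icc (δ : ℝ) (b : Bool) (h0 : 0 ≤ δ) (h1 : δ ≤ 1) :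
    ν δ b (Set.Icc (0:ℝ) 4) = 1 := by
  cases b
  · exact M_Icc _ _ (by rw [add_comm]; exact wpm_sum δ h0 h1)
  · exact M_Icc _ _ (wpm_sum δ h0 h1)

def sg {S : ℕ} (hS0 : 0 < S) (n : ℕ) (σ : Fin S → Bool) (k : ℕ) : Bool :=
  σ ⟨blk S n k, blk_lt hS0 n k⟩

def PP {S : ℕ} (hS0 : 0 < S) (n T : ℕ) (δ : ℝ) (σ : Fin S → Bool) : Measure (Fin T → ℝ) :=
  Measure.pi (fun i : Fin T => ν δ (sg hS0 n σ ((i:ℕ)+1)))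

lemma PP_prob {S : ℕ} (hS0 : 0 < S) (n T : ℕ) (δ : ℝ) (h0 : 0 ≤ δ) (h1 : δ ≤ 1)
    (σ : Fin S → Bool) : IsProbabilityMeasure (PP hS0 n T δ σ) := by
  haveI : ∀ i : Fin T, IsProbabilityMeasure (ν δ (sg hS0 n σ ((i:ℕ)+1))) :=
    fun i => ν_prob δ _ h0 h1
  unfold PP
  infer_instance

lemma g_integrable {S : ℕ} (hS0 : 0 < S) (n T : ℕ) (δ : ℝ) (h0 : 0 ≤ δ) (h1 : δ ≤ 1)
    (σ : Fin S → Bool) (π : ℕ → (Fin T → ℝ) → ℝ) (hπmeas : ∀ t, Measurable (π t))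
    (hπrange : ∀ t ∈ Finset.Icc 1 T, ∀ d, π t d ∈ Set.Icc (0 : ℝ) 4)
    (t : ℕ) (ht : t ∈ Finset.Icc 1 T) (b : Bool) :
    Integrable (fun ω => f δ b (π t ω) - If δ b) (PP hS0 n T δ σ) := by
  haveI := PP_prob hS0 n T δ h0 h1 σ
  refine Integrable.mono' (integrable_const 6)
    (((f_measurable δ b h0 h1).comp (hπmeas t)).sub measurable_const).aestronglyMeasurable ?_
  filter_upwards with ω
  have hx := hπrange t ht ω
  have h2 := f_le δ b h0 h1 _ hx
  have h1' := f_nonneg δ b (π t ω)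
  have h3 := If_nonneg δ b
  have h4 := If_le δ b h0 h1
  rw [Real.norm_eq_abs, abs_le]
  constructor <;> linarith

/-- expected regret of period `t` under sign pattern `σ`. -/
def Fi {S : ℕ} (hS0 : 0 < S) (n T : ℕ) (δ : ℝ) (π : ℕ → (Fin T → ℝ) → ℝ)
    (σ : Fin S → Bool) (t : ℕ) : ℝ :=
  ∫ ω, (f δ (sg hS0 n σ t) (π t ω) - If δ (sg hS0 n σ t)) ∂(PP hS0 n T δ σ)

set_option maxHeartbeats 1000000 in
lemma pair_bound {S : ℕ} (hS0 : 0 < S) (n T : ℕ) (hn1 : 0 < n) (hTn : T ≤ S * n)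
    (δ : ℝ) (hδ0 : 0 ≤ δ) (hδ1 : δ ≤ 1) (hnδ : (n:ℝ) * (δ*δ) ≤ 1/2)
    (π : ℕ → (Fin T → ℝ) → ℝ) (hπmeas : ∀ t, Measurable (π t))
    (hπrange : ∀ t ∈ Finset.Icc 1 T, ∀ d, π t d ∈ Set.Icc (0 : ℝ) 4)
    (t : ℕ) (ht : t ∈ Finset.Icc 1 T) (σ : Fin S → Bool)
    (hσ : σ ⟨blk S n t, blk_lt hS0 n t⟩ = true) :
    δ/4 ≤ Fi hS0 n T δ π σ t
      + Fi hS0 n T δ π (Function.update σ ⟨blk S n t, blk_lt hS0 n t⟩ false) t := by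
  set j : Fin S := ⟨blk S n t, blk_lt hS0 n t⟩ with hj
  set σ' : Fin S → Bool := Function.update σ j false with hσ'def
  haveI hPσ := PP_prob hS0 n T δ hδ0 hδ1 σ
  haveI hPσ' := PP_prob hS0 n T δ hδ0 hδ1 σ'
  have hσ'j : σ' j = false := Function.update_self j false σ
  have hsgt : sg hS0 n σ t = true := hσ
  have hsgt' : sg hS0 n σ' t = false := hσ'j
  set A : Set (Fin T → ℝ) := (π t) ⁻¹' (Set.Iio 2) with hA
  have hAmeas : MeasurableSet A := (hπmeas t) measurableSet_Iio
  -- step a: indicator lower bounds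
  have hb1 : δ * (PP hS0 n T δ σ Aᶜ).toReal
      ≤ ∫ ω, (f δ (sg hS0 n σ t) (π t ω) - If δ (sg hS0 n σ t)) ∂(PP hS0 n T δ σ) := by
    have hmono : ∀ ω, (Aᶜ).indicator (fun _ => δ) ω
        ≤ f δ (sg hS0 n σ t) (π t ω) - If δ (sg hS0 n σ t) := by
      intro ω
      by_cases hω : ω ∈ Aᶜ
      · rw [Set.indicator_of_mem hω, hsgt]
        have h2 : (2:ℝ) ≤ π t ω := by
          simp only [hA, Set.mem_compl_iff, Set.mem_preimage, Set.mem_Iio, not_lt] at hω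
          exact hω
        exact g_true δ hδ0 hδ1 _ h2
      · rw [Set.indicator_of_notMem hω]
        have := If_le_f δ (sg hS0 n σ t) _ (hπrange t ht ω)
        linarith
    have hind : Integrable ((Aᶜ).indicator (fun _ => δ)) (PP hS0 n T δ σ) :=
      (integrable_const δ).indicator hAmeas.compl
    have := integral_mono hind
      (g_integrable hS0 n T δ hδ0 hδ1 σ π hπmeas hπrange t ht _) hmono
    rwa [integral_indicator_const _ hAmeas.compl, smul_eq_mul, mul_comm] at this
  have hb2 : δ * (PP hS0 n T δ σ' A).toReal
      ≤ ∫ ω, (f δ (sg hS0 n σ' t) (π t ω) - If δ (sg hS0 n σ' t)) ∂(PP hS0 n T δ σ') := by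
    have hmono : ∀ ω, A.indicator (fun _ => δ) ω
        ≤ f δ (sg hS0 n σ' t) (π t ω) - If δ (sg hS0 n σ' t) := by
      intro ω
      by_cases hω : ω ∈ A
      · rw [Set.indicator_of_mem hω, hsgt']
        have h2 : π t ω ≤ 2 := by
          simp only [hA, Set.mem_preimage, Set.mem_Iio] at hω
          linarith
        exact g_false δ hδ0 hδ1 _ h2
      · rw [Set.indicator_of_notMem hω]
        have := If_le_f δ (sg hS0 n σ' t) _ (hπrange t ht ω)
        linarith
    have hind : Integrable (A.indicator (fun _ => δ)) (PP hS0 n T δ σ') :=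
      (integrable_const δ).indicator hAmeas
    have := integral_mono hind
      (g_integrable hS0 n T δ hδ0 hδ1 σ' π hπmeas hπrange t ht _) hmono
    rwa [integral_indicator_const _ hAmeas, smul_eq_mul, mul_comm] at this
  -- step b: Hellinger
  have hell : 1/4 ≤ (PP hS0 n T δ σ Aᶜ).toReal + (PP hS0 n T δ σ' A).toReal := by
    set p : Fin T → ℝ → ℝ≥0∞ := fun i => qden δ (sg hS0 n σ ((i:ℕ)+1)) with hp_def
    set p' : Fin T → ℝ → ℝ≥0∞ := fun i => qden δ (sg hS0 n σ' ((i:ℕ)+1)) with hp'_def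
    set r : Fin T → ℝ → ℝ≥0∞ :=
      fun i => if blk S n ((i:ℕ)+1) = (j:ℕ) then qg δ else p i with hr_def
    have hPeq : PP hS0 n T δ σ = Measure.pi (fun i => (volume : Measure ℝ).withDensity (p i)) :=
      congrArg _ (funext fun i => ν_eq δ _)
    have hPeq' : PP hS0 n T δ σ' = Measure.pi (fun i => (volume : Measure ℝ).withDensity (p' i)) :=
      congrArg _ (funext fun i => ν_eq δ _)
    have hpm : ∀ i, Measurable (p i) := fun i => qden_meas δ _
    have hpm' : ∀ i, Measurable (p' i) := fun i => qden_meas δ _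
    have hrm : ∀ i, Measurable (r i) := by
      intro i
      by_cases h : blk S n ((i:ℕ)+1) = (j:ℕ)
      · simp only [hr_def, if_pos h]; exact qg_meas δ
      · simp only [hr_def, if_neg h]; exact hpm i
    have hσp : ∀ i, SigmaFinite ((volume : Measure ℝ).withDensity (p i)) := by
      intro i; rw [← ν_eq]; infer_instance
    have hσp' : ∀ i, SigmaFinite ((volume : Measure ℝ).withDensity (p' i)) := by
      intro i; rw [← ν_eq]; infer_instance
    have hσr : ∀ i, SigmaFinite ((volume : Measure ℝ).withDensity (r i)) := by
      intro i
      by_cases h : blk S n ((i:ℕ)+1) = (j:ℕ)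
      · simp only [hr_def, if_pos h]; rw [← νg_eq]; infer_instance
      · simp only [hr_def, if_neg h, hp_def]; rw [← ν_eq]; infer_instance
    have hdom : ∀ i d, r i d * r i d ≤ p i d * p' i d := by
      intro i d
      by_cases hbl : blk S n ((i:ℕ)+1) = (j:ℕ)
      · have hfin : (⟨blk S n ((i:ℕ)+1), blk_lt hS0 n _⟩ : Fin S) = j := Fin.ext hbl
        have h1 : sg hS0 n σ ((i:ℕ)+1) = true := by rw [sg, hfin, hσ]
        have h2 : sg hS0 n σ' ((i:ℕ)+1) = false := by rw [sg, hfin, hσ'j]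
        simp only [hr_def, hp_def, hp'_def, if_pos hbl, h1, h2]
        exact qg_dom δ hδ0 hδ1 d
      · have hfin : (⟨blk S n ((i:ℕ)+1), blk_lt hS0 n _⟩ : Fin S) ≠ j := by
          intro hcon
          exact hbl (congrArg Fin.val hcon)
        have h2 : sg hS0 n σ' ((i:ℕ)+1) = sg hS0 n σ ((i:ℕ)+1) := by
          rw [sg, sg, hσ'def, Function.update_of_ne hfin]
        simp only [hr_def, hp_def, hp'_def, if_neg hbl, h2]
        exact le_rfl
    set Γ : Measure (Fin T → ℝ) :=
      Measure.pi (fun i => (volume : Measure ℝ).withDensity (r i)) with hΓ_def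
    have hell1 : Γ A ≤ (PP hS0 n T δ σ A) ^ (1/2:ℝ) * (PP hS0 n T δ σ' A) ^ (1/2:ℝ) := by
      rw [hPeq, hPeq']
      exact hellinger_bound p p' r hpm hpm' hrm hσp hσp' hσr hdom hAmeas
    have hell2 : Γ Aᶜ ≤ (PP hS0 n T δ σ Aᶜ) ^ (1/2:ℝ) * (PP hS0 n T δ σ' Aᶜ) ^ (1/2:ℝ) := by
      rw [hPeq, hPeq']
      exact hellinger_bound p p' r hpm hpm' hrm hσp hσp' hσr hdom hAmeas.compl
    -- simplify: drop the ≤1 factors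
    have hle1 : Γ A ≤ (PP hS0 n T δ σ' A) ^ (1/2:ℝ) := by
      refine le_trans hell1 ?_
      calc (PP hS0 n T δ σ A) ^ (1/2:ℝ) * (PP hS0 n T δ σ' A) ^ (1/2:ℝ)
          ≤ (1:ℝ≥0∞) ^ (1/2:ℝ) * (PP hS0 n T δ σ' A) ^ (1/2:ℝ) := by
            apply mul_le_mul_left
            exact ENNReal.rpow_le_rpow prob_le_one (by norm_num)
        _ = (PP hS0 n T δ σ' A) ^ (1/2:ℝ) := by rw [ENNReal.one_rpow, one_mul]
    have hle2 : Γ Aᶜ ≤ (PP hS0 n T δ σ Aᶜ) ^ (1/2:ℝ) := by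
      refine le_trans hell2 ?_
      calc (PP hS0 n T δ σ Aᶜ) ^ (1/2:ℝ) * (PP hS0 n T δ σ' Aᶜ) ^ (1/2:ℝ)
          ≤ (PP hS0 n T δ σ Aᶜ) ^ (1/2:ℝ) * (1:ℝ≥0∞) ^ (1/2:ℝ) := by
            apply mul_le_mul_right
            exact ENNReal.rpow_le_rpow prob_le_one (by norm_num)
        _ = (PP hS0 n T δ σ Aᶜ) ^ (1/2:ℝ) := by rw [ENNReal.one_rpow, mul_one]
    -- total mass of Γ
    have hΓuniv : Γ Set.univ = ((cg δ : ℝ≥0∞) + cg δ)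
        ^ ((Finset.univ.filter (fun i : Fin T => blk S n ((i:ℕ)+1) = (j:ℕ))).card) := by
      rw [hΓ_def, Measure.pi_univ]
      rw [← Finset.prod_filter_mul_prod_filter_not Finset.univ
        (fun i : Fin T => blk S n ((i:ℕ)+1) = (j:ℕ))]
      have e1 : ∀ i ∈ Finset.univ.filter (fun i : Fin T => blk S n ((i:ℕ)+1) = (j:ℕ)),
          ((volume : Measure ℝ).withDensity (r i)) Set.univ = ((cg δ : ℝ≥0∞) + cg δ) := by
        intro i hi
        simp only [Finset.mem_filter] at hi
        simp only [hr_def, if_pos hi.2]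
        rw [← νg_eq, M_univ]
      have e2 : ∀ i ∈ Finset.univ.filter (fun i : Fin T => ¬ (blk S n ((i:ℕ)+1) = (j:ℕ))),
          ((volume : Measure ℝ).withDensity (r i)) Set.univ = 1 := by
        intro i hi
        simp only [Finset.mem_filter] at hi
        simp only [hr_def, if_neg hi.2, hp_def]
        rw [← ν_eq]
        haveI := ν_prob δ (sg hS0 n σ ((i:ℕ)+1)) hδ0 hδ1
        exact measure_univ
      rw [Finset.prod_congr rfl e1, Finset.prod_congr rfl e2, Finset.prod_const,
        Finset.prod_const, one_pow, mul_one]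
    have hcard := card_blk_le S n T hn1 hTn (j:ℕ)
    have hΓn : ((cg δ : ℝ≥0∞) + cg δ) ^ n ≤ Γ Set.univ := by
      rw [hΓuniv]
      exact pow_le_pow_of_le_one (by positivity) (cg_le δ hδ0 hδ1) hcard
    have hsplit : Γ A + Γ Aᶜ = Γ Set.univ := measure_add_measure_compl hAmeas
    -- pass to reals
    have hfin1 : (PP hS0 n T δ σ' A) ^ (1/2:ℝ) ≠ ⊤ :=
      (ENNReal.rpow_lt_top_of_nonneg (by norm_num) (measure_ne_top _ _)).ne
    have hfin2 : (PP hS0 n T δ σ Aᶜ) ^ (1/2:ℝ) ≠ ⊤ :=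
      (ENNReal.rpow_lt_top_of_nonneg (by norm_num) (measure_ne_top _ _)).ne
    have hchain : ((cg δ : ℝ≥0∞) + cg δ) ^ n
        ≤ (PP hS0 n T δ σ' A) ^ (1/2:ℝ) + (PP hS0 n T δ σ Aᶜ) ^ (1/2:ℝ) := by
      refine le_trans hΓn ?_
      rw [← hsplit]
      exact add_le_add hle1 hle2
    have hreal := ENNReal.toReal_mono (by
        exact ENNReal.add_ne_top.mpr ⟨hfin1, hfin2⟩) hchain
    rw [ENNReal.toReal_add hfin1 hfin2, ENNReal.toReal_pow, cg_toReal δ,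
      ← ENNReal.toReal_rpow, ← ENNReal.toReal_rpow] at hreal
    set x := (PP hS0 n T δ σ' A).toReal with hx_def
    set y := (PP hS0 n T δ σ Aᶜ).toReal with hy_def
    have hx0 : 0 ≤ x := ENNReal.toReal_nonneg
    have hy0 : 0 ≤ y := ENNReal.toReal_nonneg
    rw [← Real.sqrt_eq_rpow, ← Real.sqrt_eq_rpow] at hreal
    -- lower bound the power of sqrt
    have hs0 : 0 ≤ Real.sqrt ((1-δ)*(1+δ)) := Real.sqrt_nonneg _
    have hsq : (Real.sqrt ((1-δ)*(1+δ)) ^ n) ^ 2 = ((1-δ)*(1+δ)) ^ n := by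
      rw [← pow_mul, mul_comm n 2, pow_mul, Real.sq_sqrt (by nlinarith)]
    have hbern : (1:ℝ)/2 ≤ ((1-δ)*(1+δ)) ^ n := by
      have h1 : (1:ℝ) + (n:ℝ) * (-(δ*δ)) ≤ (1 + (-(δ*δ))) ^ n :=
        one_add_mul_le_pow (by nlinarith) n
      have h2 : ((1:ℝ)-δ)*(1+δ) = 1 + (-(δ*δ)) := by ring
      rw [h2]
      have : (1:ℝ)/2 ≤ 1 + (n:ℝ) * (-(δ*δ)) := by nlinarith
      linarith
    have hsn : Real.sqrt (1/2) ≤ Real.sqrt ((1-δ)*(1+δ)) ^ n := by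
      have h1 : Real.sqrt (1/2) ≤ Real.sqrt ((Real.sqrt ((1-δ)*(1+δ)) ^ n) ^ 2) := by
        apply Real.sqrt_le_sqrt
        rw [hsq]
        exact hbern
      rwa [Real.sqrt_sq (pow_nonneg hs0 n)] at h1
    have hsum : Real.sqrt (1/2) ≤ Real.sqrt x + Real.sqrt y := le_trans hsn hreal
    have hhalf : (Real.sqrt (1/2)) ^ 2 = 1/2 := Real.sq_sqrt (by norm_num)
    have hx2 : (Real.sqrt x) ^ 2 = x := Real.sq_sqrt hx0
    have hy2 : (Real.sqrt y) ^ 2 = y := Real.sq_sqrt hy0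
    have hsx0 : 0 ≤ Real.sqrt x := Real.sqrt_nonneg _
    have hsy0 : 0 ≤ Real.sqrt y := Real.sqrt_nonneg _
    have h2 : (1:ℝ)/2 ≤ (Real.sqrt x + Real.sqrt y)^2 := by
      rw [← hhalf]
      exact pow_le_pow_left₀ (Real.sqrt_nonneg _) hsum 2
    nlinarith [sq_nonneg (Real.sqrt x - Real.sqrt y), hx2, hy2, h2]
  calc δ/4 = δ * (1/4) := by ring
  _ ≤ δ * (((PP hS0 n T δ σ) Aᶜ).toReal + ((PP hS0 n T δ σ') A).toReal) :=
      mul_le_mul_of_nonneg_left hell hδ0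
  _ = δ * ((PP hS0 n T δ σ) Aᶜ).toReal + δ * ((PP hS0 n T δ σ') A).toReal := mul_add _ _ _
  _ ≤ _ := add_le_add hb1 hb2

def Rg {S : ℕ} (hS0 : 0 < S) (n T : ℕ) (δ : ℝ) (π : ℕ → (Fin T → ℝ) → ℝ)
    (σ : Fin S → Bool) : ℝ :=
  ∑ t ∈ Finset.Icc 1 T, Fi hS0 n T δ π σ t

lemma Rg_eq {S : ℕ} (hS0 : 0 < S) (n T : ℕ) (δ : ℝ) (h0 : 0 ≤ δ) (h1 : δ ≤ 1)
    (π : ℕ → (Fin T → ℝ) → ℝ) (hπmeas : ∀ t, Measurable (π t))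
    (hπrange : ∀ t ∈ Finset.Icc 1 T, ∀ d, π t d ∈ Set.Icc (0 : ℝ) 4)
    (σ : Fin S → Bool) :
    Rg hS0 n T δ π σ = ∫ ω, (∑ t ∈ Finset.Icc 1 T,
      (f δ (sg hS0 n σ t) (π t ω) - If δ (sg hS0 n σ t))) ∂(PP hS0 n T δ σ) :=
  (integral_finset_sum _ (fun t ht =>
    g_integrable hS0 n T δ h0 h1 σ π hπmeas hπrange t ht _)).symm

end Stmt4Aux

open Stmt4Aux in
set_option maxHeartbeats 1000000 in
/-- Theorem 3(1): minimax lower bound for the switch-number budget and general demand.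
For `h = b = 1`, decisions in `[0,4]`, and any admissible policy `π` (each `π t` is a
measurable map of the history `D 1, …, D (t−1)` into `[0,4]`), there is an instance
`D ∈ 𝒟_S^{(1)}` — a sequence of `T` independent demands whose laws are absolutely continuous,
supported in `[0,4]`, with switch number at most `S` — on which the expected dynamic regret
is at least `(e^{−16}/4)·√(S·T)`.  (Coordinate `i : Fin T` of the sample path carries the
demand of period `i+1`.) -/
theorem stmt_4
    (T S : ℕ) (hS : 1 ≤ S) (hT : 17 * S ≤ T)
    (π : ℕ → (Fin T → ℝ) → ℝ)
    (hπmeas : ∀ t, Measurable (π t))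
    (hπhist : ∀ t, ∀ d d' : Fin T → ℝ,
      (∀ i : Fin T, (i : ℕ) + 1 < t → d i = d' i) → π t d = π t d')
    (hπrange : ∀ t ∈ Finset.Icc 1 T, ∀ d, π t d ∈ Set.Icc (0 : ℝ) 4) :
    ∃ μ : ℕ → ProbabilityMeasure ℝ,
      (∀ t ∈ Finset.Icc 1 T, (μ t : Measure ℝ) ≪ MeasureTheory.volume) ∧
      (∀ t ∈ Finset.Icc 1 T, (μ t : Measure ℝ) (Set.Icc (0 : ℝ) 4) = 1) ∧
      ((Finset.Icc 2 T).filter (fun t => μ t ≠ μ (t - 1))).card ≤ S ∧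
      Real.exp (-16) / 4 * Real.sqrt ((S : ℝ) * T) ≤
        ∫ ω : Fin T → ℝ,
          (∑ t ∈ Finset.Icc 1 T,
            ((∫ d, |π t ω - d| ∂(μ t : Measure ℝ)) -
              sInf ((fun x => ∫ d, |x - d| ∂(μ t : Measure ℝ)) '' Set.Icc (0 : ℝ) 4)))
          ∂(Measure.pi fun i : Fin T => ((μ ((i : ℕ) + 1) : Measure ℝ))) := by
  have hS0 : 0 < S := hS
  have hT1 : 0 < T := by omega
  set n : ℕ := (T + S - 1) / S with hn_def
  have hn1 : 0 < n := Nat.div_pos (by omega) hS0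
  have hmod := Nat.div_add_mod (T + S - 1) S
  rw [← hn_def] at hmod
  have hmodlt : (T + S - 1) % S < S := Nat.mod_lt _ hS0
  have hTn : T ≤ S * n := by omega
  have hSn_le : S * n ≤ T + S - 1 := by omega
  set δ : ℝ := Real.sqrt ((S:ℝ)/(T:ℝ)) / 2 with hδ_def
  have hTpos : (0:ℝ) < (T:ℝ) := by exact_mod_cast hT1
  have hSpos : (0:ℝ) ≤ (S:ℝ) := Nat.cast_nonneg S
  have hST : (0:ℝ) ≤ (S:ℝ)/(T:ℝ) := by positivity
  have hδ0 : 0 ≤ δ := by rw [hδ_def]; positivity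
  have hSleT : (S:ℝ) ≤ (T:ℝ) := by
    have : S ≤ T := by omega
    exact_mod_cast this
  have hδ1 : δ ≤ 1 := by
    rw [hδ_def]
    have h1 : Real.sqrt ((S:ℝ)/(T:ℝ)) ≤ 1 :=
      Real.sqrt_le_one.mpr ((div_le_one hTpos).mpr hSleT)
    linarith
  have hδδ : δ * δ = (S:ℝ)/(4*(T:ℝ)) := by
    rw [hδ_def, div_mul_div_comm, Real.mul_self_sqrt hST]
    rw [div_div]
    ring_nf
  have hnR : ((n:ℝ)) * (S:ℝ) ≤ 2*(T:ℝ) := by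
    have h2 : S * n ≤ 2*T := by omega
    have h3 : ((S*n : ℕ):ℝ) ≤ ((2*T : ℕ):ℝ) := by exact_mod_cast h2
    push_cast at h3
    linarith
  have hnδ : (n:ℝ) * (δ*δ) ≤ 1/2 := by
    rw [hδδ]
    have he : (n:ℝ) * ((S:ℝ)/(4*(T:ℝ))) = ((n:ℝ)*(S:ℝ))/(4*(T:ℝ)) := by ring
    rw [he, div_le_iff₀ (by positivity)]
    linarith
  haveI hprob : ∀ b, IsProbabilityMeasure (ν δ b) := fun b => ν_prob δ b hδ0 hδ1
  -- per-period averaged bound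
  have hsumt : ∀ t ∈ Finset.Icc 1 T,
      (2:ℝ)^S * (δ/8) ≤ ∑ σ : Fin S → Bool, Fi hS0 n T δ π σ t := by
    intro t ht
    set j : Fin S := ⟨blk S n t, blk_lt hS0 n t⟩ with hj
    set e : (Fin S → Bool) → (Fin S → Bool) := fun σ => Function.update σ j (!σ j) with he_def
    have he_inv : Function.Involutive e := by
      intro σ; funext i
      by_cases h : i = j
      · subst h; simp [he_def, Function.update_self]
      · simp [he_def, Function.update_of_ne h]
    have hpair : ∀ σ : Fin S → Bool, δ/4 ≤ Fi hS0 n T δ π σ t + Fi hS0 n T δ π (e σ) t := by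
      intro σ
      rcases Bool.eq_false_or_eq_true (σ j) with hσj | hσj
      · have h2 : e σ = Function.update σ j false := by
          rw [he_def]; simp [hσj]
        have hp := pair_bound hS0 n T hn1 hTn δ hδ0 hδ1 hnδ π hπmeas hπrange t ht σ hσj
        rw [← h2] at hp
        exact hp
      · have h1 : (e σ) j = true := by
          simp [he_def, Function.update_self, hσj]
        have h2 : Function.update (e σ) j false = σ := by
          funext i
          by_cases h : i = j
          · subst h; simp [Function.update_self, hσj]
          · simp [he_def, Function.update_of_ne h]
        have hp := pair_bound hS0 n T hn1 hTn δ hδ0 hδ1 hnδ π hπmeas hπrange t ht (e σ) h1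
        rw [h2] at hp
        linarith
    have h2sum : ∑ σ : Fin S → Bool, Fi hS0 n T δ π (e σ) t
        = ∑ σ : Fin S → Bool, Fi hS0 n T δ π σ t :=
      he_inv.bijective.sum_comp (fun σ => Fi hS0 n T δ π σ t)
    have h3 := Finset.sum_le_sum (fun (σ : Fin S → Bool) (_ : σ ∈ Finset.univ) => hpair σ)
    rw [Finset.sum_add_distrib, h2sum, Finset.sum_const] at h3
    have hcard : (Finset.univ : Finset (Fin S → Bool)).card = 2^S := by
      rw [Finset.card_univ, Fintype.card_fun, Fintype.card_bool, Fintype.card_fin]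
    rw [hcard, nsmul_eq_mul] at h3
    push_cast at h3
    linarith
  -- total averaged bound
  have htot : (2:ℝ)^S * ((T:ℝ) * (δ/8)) ≤ ∑ σ : Fin S → Bool, Rg hS0 n T δ π σ := by
    have hc : ((Finset.Icc 1 T).card : ℝ) = (T:ℝ) := by
      rw [Nat.card_Icc]
      push_cast
      ring
    calc (2:ℝ)^S * ((T:ℝ) * (δ/8))
        = ∑ _t ∈ Finset.Icc 1 T, (2:ℝ)^S * (δ/8) := by
          rw [Finset.sum_const, nsmul_eq_mul, hc]; ring
      _ ≤ ∑ t ∈ Finset.Icc 1 T, ∑ σ : Fin S → Bool, Fi hS0 n T δ π σ t :=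
          Finset.sum_le_sum hsumt
      _ = ∑ σ : Fin S → Bool, ∑ t ∈ Finset.Icc 1 T, Fi hS0 n T δ π σ t := Finset.sum_comm
      _ = ∑ σ : Fin S → Bool, Rg hS0 n T δ π σ := rfl
  obtain ⟨σ, hσR⟩ : ∃ σ : Fin S → Bool, (T:ℝ) * (δ/8) ≤ Rg hS0 n T δ π σ := by
    by_contra hcon
    push_neg at hcon
    have hlt := Finset.sum_lt_sum_of_nonempty (Finset.univ_nonempty)
      (fun (σ : Fin S → Bool) (_ : σ ∈ Finset.univ) => hcon σ)
    rw [Finset.sum_const, Finset.card_univ, Fintype.card_fun, Fintype.card_bool,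
      Fintype.card_fin, nsmul_eq_mul] at hlt
    push_cast at hlt
    linarith
  -- package the answer
  refine ⟨fun k => ⟨ν δ (sg hS0 n σ k), hprob _⟩, fun t _ => ν_ac δ _,
    fun t _ => ν_Icc δ _ hδ0 hδ1, ?_, ?_⟩
  · refine le_trans (Finset.card_le_card ?_) (card_blkjump S n T hS0)
    intro t htf
    simp only [Finset.mem_filter] at htf ⊢
    refine ⟨htf.1, ?_⟩
    intro hblk
    apply htf.2
    have hs : sg hS0 n σ t = sg hS0 n σ (t-1) := by
      rw [sg, sg]
      congr 1
      exact Fin.ext hblk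
    exact congrArg (fun b => (⟨ν δ b, hprob b⟩ : ProbabilityMeasure ℝ)) hs
  · show Real.exp (-16) / 4 * Real.sqrt ((S : ℝ) * T) ≤
      ∫ ω : Fin T → ℝ, (∑ t ∈ Finset.Icc 1 T,
        (f δ (sg hS0 n σ t) (π t ω) - If δ (sg hS0 n σ t))) ∂(PP hS0 n T δ σ)
    rw [← Rg_eq hS0 n T δ hδ0 hδ1 π hπmeas hπrange σ]
    refine le_trans ?_ hσR
    -- numeric closing
    have e1 : Real.sqrt ((S:ℝ)/(T:ℝ)) = Real.sqrt (S:ℝ) / Real.sqrt (T:ℝ) :=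
      Real.sqrt_div hSpos _
    have e2 : Real.sqrt ((S:ℝ)*(T:ℝ)) = Real.sqrt (S:ℝ) * Real.sqrt (T:ℝ) :=
      Real.sqrt_mul hSpos _
    have e3 : Real.sqrt (T:ℝ) * Real.sqrt (T:ℝ) = (T:ℝ) := Real.mul_self_sqrt hTpos.le
    have hsT : 0 < Real.sqrt (T:ℝ) := Real.sqrt_pos.mpr hTpos
    have hsqrtEq : (T:ℝ) * (δ/8) = Real.sqrt ((S:ℝ)*(T:ℝ)) / 16 := by
      rw [hδ_def, e1, e2]
      field_simp
      nlinarith [e3, Real.sqrt_nonneg (S:ℝ)]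
    have hexp : Real.exp (-16) ≤ 1/4 := by
      have h17 : (17:ℝ) ≤ Real.exp 16 := by
        have := Real.add_one_le_exp (16:ℝ); linarith
      have h4 : (4:ℝ) ≤ Real.exp 16 := by linarith
      rw [Real.exp_neg]
      calc (Real.exp 16)⁻¹ ≤ (4:ℝ)⁻¹ := by
            apply inv_anti₀ (by norm_num) h4
        _ = 1/4 := by norm_num
    calc Real.exp (-16) / 4 * Real.sqrt ((S:ℝ)*(T:ℝ))
        ≤ (1/4)/4 * Real.sqrt ((S:ℝ)*(T:ℝ)) := by
          apply mul_le_mul_of_nonneg_right _ (Real.sqrt_nonneg _)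
          linarith
      _ = Real.sqrt ((S:ℝ)*(T:ℝ)) / 16 := by ring
      _ = (T:ℝ) * (δ/8) := hsqrtEq.symm

end
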